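/- Let G = (V,E) be a finite simple graph and let A be a symmetric real matrix indexed by V with A_{ij} = 1 for every non-edge {i,j} (including the diagonal). Let c be the minimal entry of A and ρ its spectral radius. Let I, J ⊆ V be subsets such that the number of ordered pairs (i,j) ∈ I × J with {i,j} ∈ E is at most ε|I|·|J| (so edges inside I ∩ J are counted twice). If (1−c)ε < 1, then |I| · |J| ≤ ( ρ / (1 − (1−c)ε) )². -/

import Mathlib

open Matrix Finset

lemma key_spectral {V : Type*} [Fintype V] [DecidableEq V] [Nonempty V]
    (A : Matrix V V ℝ) (hA : A.IsHermitian) (x y : V → ℝ) (ρ : ℝ)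
    (hρ : ∀ k, |hA.eigenvalues k| ≤ ρ) :
    x ⬝ᵥ (A *ᵥ y) ≤ ρ * (Real.sqrt (x ⬝ᵥ x) * Real.sqrt (y ⬝ᵥ y)) := by
  classical
  set B : Matrix V V ℝ := (hA.eigenvectorUnitary : Matrix V V ℝ) with hB
  have hBB : B * star B = 1 := (Matrix.mem_unitaryGroup_iff).mp hA.eigenvectorUnitary.2
  set p : V → ℝ := (star B) *ᵥ x with hp
  set q : V → ℝ := (star B) *ᵥ y with hq
  have hdot : ∀ z w : V → ℝ, z ⬝ᵥ (B *ᵥ w) = ((star B) *ᵥ z) ⬝ᵥ w := by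
    intro z w
    rw [dotProduct_mulVec, ← mulVec_transpose,
      Matrix.star_eq_conjTranspose, Matrix.conjTranspose_eq_transpose_of_trivial]
  have hpx : p ⬝ᵥ p = x ⬝ᵥ x := by
    rw [hp, ← hdot x p, hp, mulVec_mulVec, hBB, one_mulVec]
  have hqy : q ⬝ᵥ q = y ⬝ᵥ y := by
    rw [hq, ← hdot y q, hq, mulVec_mulVec, hBB, one_mulVec]
  have hmain : x ⬝ᵥ (A *ᵥ y) = ∑ k, hA.eigenvalues k * (p k * q k) := by
    have h2 : x ⬝ᵥ (A *ᵥ y)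
        = p ⬝ᵥ ((diagonal (RCLike.ofReal ∘ hA.eigenvalues)) *ᵥ q) := by
      conv_lhs => rw [hA.spectral_theorem, Unitary.conjStarAlgAut_apply]
      rw [← mulVec_mulVec, ← mulVec_mulVec, hdot, ← hp, ← hq]
    rw [h2]
    simp only [dotProduct, Matrix.mulVec_diagonal, Function.comp_apply, RCLike.ofReal_real_eq_id,
      id_eq]
    exact Finset.sum_congr rfl fun k _ => by ring
  calc x ⬝ᵥ (A *ᵥ y) = ∑ k, hA.eigenvalues k * (p k * q k) := hmain
    _ ≤ ∑ k, ρ * (|p k| * |q k|) := by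
        apply Finset.sum_le_sum
        intro k _
        calc hA.eigenvalues k * (p k * q k) ≤ |hA.eigenvalues k * (p k * q k)| := le_abs_self _
          _ = |hA.eigenvalues k| * (|p k| * |q k|) := by rw [abs_mul, abs_mul]
          _ ≤ ρ * (|p k| * |q k|) := by
              apply mul_le_mul_of_nonneg_right (hρ k)
              positivity
    _ = ρ * ∑ k, |p k| * |q k| := by rw [Finset.mul_sum]
    _ ≤ ρ * (Real.sqrt (x ⬝ᵥ x) * Real.sqrt (y ⬝ᵥ y)) := by
        apply mul_le_mul_of_nonneg_left _ (le_trans (abs_nonneg _) (hρ (Classical.arbitrary V)))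
        have cs := Finset.sum_mul_sq_le_sq_mul_sq Finset.univ (fun k => |p k|) (fun k => |q k|)
        simp only [sq_abs] at cs
        have hpp : ∑ k, p k ^ 2 = x ⬝ᵥ x := by rw [← hpx]; simp [dotProduct, sq]
        have hqq : ∑ k, q k ^ 2 = y ⬝ᵥ y := by rw [← hqy]; simp [dotProduct, sq]
        calc ∑ k, |p k| * |q k|
            = Real.sqrt ((∑ k, |p k| * |q k|) ^ 2) := (Real.sqrt_sq (by positivity)).symm
          _ ≤ Real.sqrt ((∑ k, p k ^ 2) * (∑ k, q k ^ 2)) := Real.sqrt_le_sqrt cs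
          _ = Real.sqrt (x ⬝ᵥ x) * Real.sqrt (y ⬝ᵥ y) := by
              rw [hpp, hqq, Real.sqrt_mul (x := x ⬝ᵥ x) (by rw [← hpp]; exact Finset.sum_nonneg fun k _ => sq_nonneg _)]

/-- Cross version of the Lovász bound: if the number of ordered pairs `(i,j) ∈ I × J`
with `{i,j} ∈ E` is at most `ε|I||J|` and `(1-c)ε < 1`, where `c` is the minimal entry of `A`
and `ρ` its spectral radius, then `|I|·|J| ≤ (ρ / (1 - (1-c)ε))²`. -/
theorem stmt_2 {V : Type*} [Fintype V] [DecidableEq V] [Nonempty V]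
    (G : SimpleGraph V) [DecidableRel G.Adj] (A : Matrix V V ℝ) (hA : A.IsHermitian)
    (h1 : ∀ i j : V, ¬ G.Adj i j → A i j = 1)
    (c : ℝ) (hc : IsLeast (Set.range fun p : V × V => A p.1 p.2) c)
    (ε : ℝ) (hε : 0 ≤ ε) (hcε : (1 - c) * ε < 1)
    (I J : Finset V)
    (hIJ : ((((I ×ˢ J).filter fun p => G.Adj p.1 p.2).card : ℝ))
      ≤ ε * (I.card : ℝ) * (J.card : ℝ)) :
    (I.card : ℝ) * (J.card : ℝ)
      ≤ ((⨆ i, |hA.eigenvalues i|) / (1 - (1 - c) * ε)) ^ 2 := by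
  classical
  set ρ := ⨆ i, |hA.eigenvalues i| with hρdef
  have hbdd : BddAbove (Set.range fun i => |hA.eigenvalues i|) :=
    Set.Finite.bddAbove (Set.finite_range _)
  have hρk : ∀ k, |hA.eigenvalues k| ≤ ρ := fun k => le_ciSup hbdd k
  have hρ0 : 0 ≤ ρ := le_trans (abs_nonneg _) (hρk (Classical.arbitrary V))
  set x : V → ℝ := fun i => if i ∈ I then 1 else 0 with hxdef
  set y : V → ℝ := fun j => if j ∈ J then 1 else 0 with hydef
  have hxx : x ⬝ᵥ x = (I.card : ℝ) := by
    simp [dotProduct, hxdef, ite_and, Finset.sum_ite_mem]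
  have hyy : y ⬝ᵥ y = (J.card : ℝ) := by
    simp [dotProduct, hydef, ite_and, Finset.sum_ite_mem]
  have hquad : x ⬝ᵥ (A *ᵥ y) = ∑ pr ∈ I ×ˢ J, A pr.1 pr.2 := by
    rw [Finset.sum_product]
    simp [dotProduct, Matrix.mulVec, hxdef, hydef, ite_mul, mul_ite,
      Finset.mul_sum, Finset.sum_ite_mem, Finset.univ_inter]
  have hlb : ∀ i j, c ≤ A i j := fun i j => hc.2 ⟨(i, j), rfl⟩
  have hc1 : c ≤ 1 := by
    have i0 := Classical.arbitrary V
    have := hlb i0 i0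
    rwa [h1 i0 i0 (G.irrefl)] at this
  set E := (I ×ˢ J).filter fun p => G.Adj p.1 p.2 with hEdef
  have hE : E ⊆ I ×ˢ J := Finset.filter_subset _ _
  have hcard : ((I ×ˢ J).filter fun p => ¬ G.Adj p.1 p.2).card
      = I.card * J.card - E.card := by
    rw [hEdef, eq_tsub_iff_add_eq_of_le, add_comm,
      Finset.card_filter_add_card_filter_not, Finset.card_product]
    exact le_trans (Finset.card_le_card hE) (le_of_eq (Finset.card_product I J))
  have hEle : (E.card : ℝ) ≤ (I.card : ℝ) * J.card := by
    have := Finset.card_le_card hE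
    rw [Finset.card_product] at this
    exact_mod_cast this
  have hsum : (I.card : ℝ) * J.card - (1 - c) * E.card ≤ ∑ pr ∈ I ×ˢ J, A pr.1 pr.2 := by
    rw [← Finset.sum_filter_add_sum_filter_not (I ×ˢ J) (fun p => G.Adj p.1 p.2)
      (fun pr => A pr.1 pr.2)]
    have h2 : (c : ℝ) * E.card ≤ ∑ pr ∈ E, A pr.1 pr.2 := by
      calc (c : ℝ) * E.card = ∑ _pr ∈ E, c := by rw [Finset.sum_const, nsmul_eq_mul]; ring
        _ ≤ ∑ pr ∈ E, A pr.1 pr.2 := Finset.sum_le_sum fun pr _ => hlb pr.1 pr.2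
    have h3 : ∑ pr ∈ (I ×ˢ J).filter (fun p => ¬ G.Adj p.1 p.2), A pr.1 pr.2
        = ((I.card * J.card - E.card : ℕ) : ℝ) := by
      rw [← hcard]
      rw [Finset.sum_congr rfl (fun pr hpr => h1 pr.1 pr.2 (by simpa using (Finset.mem_filter.mp hpr).2))]
      simp
    rw [h3]
    have h4 : ((I.card * J.card - E.card : ℕ) : ℝ)
        = (I.card : ℝ) * J.card - E.card := by
      have : E.card ≤ I.card * J.card := by
        rw [← Finset.card_product]; exact Finset.card_le_card hE
      push_cast [Nat.cast_sub this]; ring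
    rw [h4]
    have := h2
    nlinarith [h2]
  have hkey := key_spectral A hA x y ρ hρk
  rw [hquad, hxx, hyy] at hkey
  set d : ℝ := 1 - (1 - c) * ε with hddef
  have hd : 0 < d := by rw [hddef]; linarith
  have hmain : (I.card : ℝ) * J.card * d
      ≤ ρ * (Real.sqrt I.card * Real.sqrt J.card) := by
    have hlow : (I.card : ℝ) * J.card * d ≤ ∑ pr ∈ I ×ˢ J, A pr.1 pr.2 := by
      refine le_trans ?_ hsum
      rw [hddef]
      nlinarith [hIJ, hEle, hc1]
    linarith [hkey]
  set sN : ℝ := Real.sqrt I.card * Real.sqrt J.card with hsNdef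
  have hsN0 : 0 ≤ sN := by positivity
  have hsN2 : sN ^ 2 = (I.card : ℝ) * J.card := by
    rw [hsNdef, mul_pow, Real.sq_sqrt (by positivity), Real.sq_sqrt (by positivity)]
  rw [div_pow, le_div_iff₀ (by positivity)]
  nlinarith [sq_nonneg (ρ - sN * d), mul_le_mul_of_nonneg_right hmain hd.le, hsN2, hmain]
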